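/- In the random candidate-DAG setting, assume the weight sequence is strongly consistent, i.e., the real random variables Σ_{k=1}^{K_n} w^n_k · |E^{(k)}_n ∇ E*_n| converge to 0 in probability as n → ∞. Then min_{(i,j) ∈ E*_n} s^n_{ij} → 1 in probability and max_{(i,j) ∈ ([p_n]×[p_n]) \ E*_n} s^n_{ij} → 0 in probability as n → ∞ (with the convention that the maximum over an empty set equals 0). -/

import Mathlib

open MeasureTheory Filter

/-- Real random variables `Z n` converge to `z` in probability:
for every `ε > 0`, `P(|Z_n − z| > ε) → 0` as `n → ∞`. -/
def TendstoInProb {Ω : Type*} [MeasurableSpace Ω] (P : Measure Ω)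
    (Z : ℕ → Ω → ℝ) (z : ℝ) : Prop :=
  ∀ ε : ℝ, 0 < ε → Tendsto (fun n => P {ω | ε < |Z n ω - z|}) atTop (nhds 0)

theorem daggr_strong_consistency_importance_scores
    {Ω : Type*} [MeasurableSpace Ω] (P : Measure Ω) [IsProbabilityMeasure P]
    (p K : ℕ → ℕ) (hp : ∀ n, 1 ≤ p n) (hK : ∀ n, 1 ≤ K n)
    (w : (n : ℕ) → Fin (K n) → Ω → ℝ)
    (hw0 : ∀ n k ω, 0 ≤ w n k ω)
    (hw1 : ∀ n ω, ∑ k, w n k ω = 1)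
    (hwmeas : ∀ n k, Measurable (w n k))
    (E : (n : ℕ) → Fin (K n) → Ω → Finset (Fin (p n) × Fin (p n)))
    (hEmeas : ∀ n k (e : Fin (p n) × Fin (p n)), MeasurableSet {ω | e ∈ E n k ω})
    (Estar : (n : ℕ) → Finset (Fin (p n) × Fin (p n)))
    (hEstar : ∀ n, (Estar n).Nonempty)
    (hstrong : TendstoInProb P (fun n ω =>
      ∑ k, w n k ω * ((symmDiff (E n k ω) (Estar n)).card : ℝ)) 0) :
    TendstoInProb P (fun n ω =>
      (Estar n).inf' (hEstar n) (fun e =>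
        ∑ k, w n k ω * (if e ∈ E n k ω then (1 : ℝ) else 0))) 1 ∧
    TendstoInProb P (fun n ω =>
      if h : (Finset.univ \ Estar n).Nonempty then
        (Finset.univ \ Estar n).sup' h (fun e =>
          ∑ k, w n k ω * (if e ∈ E n k ω then (1 : ℝ) else 0))
      else 0) 0 := by
  set Z : ℕ → Ω → ℝ := fun n ω =>
    ∑ k, w n k ω * ((symmDiff (E n k ω) (Estar n)).card : ℝ) with hZ
  have hZ0 : ∀ n ω, 0 ≤ Z n ω := fun n ω =>
    Finset.sum_nonneg fun k _ => mul_nonneg (hw0 n k ω) (Nat.cast_nonneg _)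
  set s : (n : ℕ) → Ω → Fin (p n) × Fin (p n) → ℝ := fun n ω e =>
    ∑ k, w n k ω * (if e ∈ E n k ω then (1 : ℝ) else 0) with hs
  have hs0 : ∀ n ω e, 0 ≤ s n ω e := fun n ω e =>
    Finset.sum_nonneg fun k _ => mul_nonneg (hw0 n k ω) (by positivity)
  have hs1 : ∀ n ω e, s n ω e ≤ 1 := by
    intro n ω e
    calc s n ω e ≤ ∑ k, w n k ω := by
          apply Finset.sum_le_sum
          intro k _
          by_cases h : e ∈ E n k ω <;> simp [h, hw0 n k ω]
      _ = 1 := hw1 n ω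
  -- claim A: e ∈ Estar → 1 - s ≤ Z
  have hA : ∀ n ω e, e ∈ Estar n → 1 - s n ω e ≤ Z n ω := by
    intro n ω e he
    have : 1 - s n ω e = ∑ k, w n k ω * (1 - (if e ∈ E n k ω then (1:ℝ) else 0)) := by
      rw [show ∀ (f : Fin (K n) → ℝ), (∑ k, w n k ω * (1 - f k)) = (∑ k, w n k ω) - ∑ k, w n k ω * f k from fun f => by rw [← Finset.sum_sub_distrib]; exact Finset.sum_congr rfl fun k _ => by ring, hw1 n ω]
    rw [this]
    apply Finset.sum_le_sum
    intro k _
    apply mul_le_mul_of_nonneg_left _ (hw0 n k ω)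
    by_cases h : e ∈ E n k ω
    · simp [h]
    · simp only [h, if_neg, if_false, sub_zero]
      have hmem : e ∈ symmDiff (E n k ω) (Estar n) := by
        rw [Finset.mem_symmDiff]
        exact Or.inr ⟨he, h⟩
      have : 1 ≤ (symmDiff (E n k ω) (Estar n)).card := Finset.card_pos.mpr ⟨e, hmem⟩
      exact_mod_cast this
  -- claim B: e ∉ Estar → s ≤ Z
  have hB : ∀ n ω e, e ∉ Estar n → s n ω e ≤ Z n ω := by
    intro n ω e he
    apply Finset.sum_le_sum
    intro k _
    apply mul_le_mul_of_nonneg_left _ (hw0 n k ω)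
    by_cases h : e ∈ E n k ω
    · simp only [h, if_true]
      have hmem : e ∈ symmDiff (E n k ω) (Estar n) := by
        rw [Finset.mem_symmDiff]
        exact Or.inl ⟨h, he⟩
      have : 1 ≤ (symmDiff (E n k ω) (Estar n)).card := Finset.card_pos.mpr ⟨e, hmem⟩
      exact_mod_cast this
    · simp [h]
  constructor
  · intro ε hε
    refine tendsto_of_tendsto_of_tendsto_of_le_of_le tendsto_const_nhds (hstrong ε hε)
      (fun n => zero_le) (fun n => measure_mono ?_)
    intro ω hω
    simp only [Set.mem_setOf_eq] at hω ⊢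
    obtain ⟨e0, he0, heq⟩ := Finset.exists_mem_eq_inf' (hEstar n)
      (fun e => s n ω e)
    have hle : (Estar n).inf' (hEstar n) (fun e => s n ω e) ≤ 1 := heq ▸ hs1 n ω e0
    have habs : |(Estar n).inf' (hEstar n) (fun e => s n ω e) - 1| ≤ Z n ω := by
      rw [abs_sub_comm, abs_of_nonneg (by linarith)]
      rw [heq]
      exact hA n ω e0 he0
    rw [sub_zero, abs_of_nonneg (hZ0 n ω)]
    exact lt_of_lt_of_le hω habs
  · intro ε hε
    refine tendsto_of_tendsto_of_tendsto_of_le_of_le tendsto_const_nhds (hstrong ε hε)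
      (fun n => zero_le) (fun n => measure_mono ?_)
    intro ω hω
    simp only [Set.mem_setOf_eq] at hω ⊢
    rw [sub_zero, abs_of_nonneg (hZ0 n ω)]
    by_cases h : (Finset.univ \ Estar n).Nonempty
    · rw [dif_pos h] at hω
      obtain ⟨e0, he0, heq⟩ := Finset.exists_mem_eq_sup' h (fun e => s n ω e)
      rw [sub_zero, heq, abs_of_nonneg (hs0 n ω e0)] at hω
      have he0' : e0 ∉ Estar n := (Finset.mem_sdiff.mp he0).2
      exact lt_of_lt_of_le hω (hB n ω e0 he0')
    · rw [dif_neg h] at hω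
      simp at hω
      linarith
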